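/- Let m > 0, let (sₙ) be a sequence of positive reals with sₙ → ∞, and let f : (0,∞) → (0,∞) satisfy f(sₙ)/sₙ → 1/(2m). Define φ(s) = f(s) if f(s) ≤ √s and φ(s) = f(s) - √(f(s)² - s) if f(s) > √s. Then φ(sₙ) → m. -/

import Mathlib

open Filter

theorem stmt_2 (m : ℝ) (hm : 0 < m) (f : ℝ → ℝ)
    (hf : ∀ s > (0:ℝ), 0 < f s)
    (s : ℕ → ℝ) (hspos : ∀ n, 0 < s n)
    (hs : Tendsto s atTop atTop)
    (hratio : Tendsto (fun n => f (s n) / s n) atTop (nhds (1 / (2 * m)))) :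
    Tendsto (fun n =>
      if f (s n) ≤ Real.sqrt (s n) then f (s n)
      else f (s n) - Real.sqrt ((f (s n)) ^ 2 - s n)) atTop (nhds m) := by
  set c : ℝ := 1 / (2 * m) with hcdef
  have hc : 0 < c := by positivity
  have hinv : Tendsto (fun n => 1 / s n) atTop (nhds 0) := by
    simpa [Function.comp_def] using (tendsto_inv_atTop_zero.comp hs)
  have hsub : Tendsto (fun n => (f (s n) / s n) ^ 2 - 1 / s n) atTop (nhds (c ^ 2)) := by
    simpa using (hratio.pow 2).sub hinv
  have hsqrt : Tendsto (fun n => Real.sqrt ((f (s n) / s n) ^ 2 - 1 / s n)) atTop (nhds c) := by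
    have := hsub.sqrt
    rwa [Real.sqrt_sq hc.le] at this
  have hH : Tendsto (fun n => f (s n) / s n + Real.sqrt ((f (s n) / s n) ^ 2 - 1 / s n))
      atTop (nhds (1 / m)) := by
    have := hratio.add hsqrt
    have h2 : c + c = 1 / m := by
      rw [hcdef, ← add_div, div_eq_div_iff (by positivity) hm.ne']
      ring
    rwa [h2] at this
  have hfin : Tendsto (fun n =>
      (f (s n) / s n + Real.sqrt ((f (s n) / s n) ^ 2 - 1 / s n))⁻¹) atTop (nhds m) := by
    have := hH.inv₀ (by positivity)
    simpa using this
  refine hfin.congr' ?_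
  have hev1 : ∀ᶠ n in atTop, c / 2 < f (s n) / s n :=
    hratio.eventually (eventually_gt_nhds (by linarith))
  have hev2 : ∀ᶠ n in atTop, (2 / c) ^ 2 < s n := hs.eventually (eventually_gt_atTop _)
  filter_upwards [hev1, hev2] with n ha hst
  set t := s n with htdef
  have ht : 0 < t := hspos n
  set F := f t with hFdef
  have hsqt : (2 / c) < Real.sqrt t := by
    rw [show (2/c : ℝ) = Real.sqrt ((2/c)^2) by rw [Real.sqrt_sq (by positivity)]]
    exact Real.sqrt_lt_sqrt (by positivity) hst
  have hss : Real.sqrt t * Real.sqrt t = t := Real.mul_self_sqrt ht.le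
  have hsqpos : 0 < Real.sqrt t := lt_trans (by positivity) hsqt
  have hFt : Real.sqrt t < F := by
    have hF' : c * t < F * 2 := (div_lt_div_iff₀ (by norm_num) ht).mp ha
    have h2c : 2 < Real.sqrt t * c := (div_lt_iff₀ hc).mp hsqt
    have hprod : 0 < Real.sqrt t * (Real.sqrt t * c - 2) :=
      mul_pos hsqpos (by linarith)
    have h3 : Real.sqrt t * (Real.sqrt t * c) = t * c := by rw [← mul_assoc, hss]
    nlinarith [hprod, h3, hF']
  have hFpos : 0 < F := lt_trans hsqpos hFt
  have hF2 : t < F ^ 2 := by nlinarith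
  set r := Real.sqrt (F ^ 2 - t) with hrdef
  have hr0 : 0 ≤ r := Real.sqrt_nonneg _
  have hr2 : r ^ 2 = F ^ 2 - t := Real.sq_sqrt (by linarith)
  have hkey : Real.sqrt ((F / t) ^ 2 - 1 / t) = r / t := by
    rw [show (F / t) ^ 2 - 1 / t = (F ^ 2 - t) / t ^ 2 by field_simp,
      Real.sqrt_div (by linarith), Real.sqrt_sq ht.le]
  rw [if_neg (not_le.mpr hFt), hkey]
  have hFr : 0 < F + r := by linarith
  field_simp
  nlinarith [hr2]
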